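/- Let H be a graph and T a tree on t vertices, and suppose U ⊆ V(H) is such that H \ U has r connected components and the (U, t)-blow-up of H is T-free. Then for every n divisible by |H|, there exists a T-free graph G on n vertices containing at least (n/|H|)^r copies of H. Consequently ex(n, H, T) = Ω(n^r). -/

import Mathlib

def IsCopy {α β : Type*} (H : SimpleGraph α) (G : SimpleGraph β) (f : α ↪ β) : Prop :=
  ∀ a b, H.Adj a b → G.Adj (f a) (f b)

def HasCopy {α β : Type*} (H : SimpleGraph α) (G : SimpleGraph β) : Prop :=
  ∃ f : α ↪ β, IsCopy H G f

def TFree {α β : Type*} (G : SimpleGraph β) (T : SimpleGraph α) : Prop := ¬ HasCopy T G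

noncomputable def copyCount {α β : Type*} (H : SimpleGraph α) (G : SimpleGraph β) : ℕ :=
  Nat.card {f : α ↪ β // IsCopy H G f}

noncomputable def exNum {α γ : Type*} (n : ℕ) (H : SimpleGraph α) (T : SimpleGraph γ) : ℕ :=
  sSup {m | ∃ G : SimpleGraph (Fin n), TFree G T ∧ copyCount H G = m}

def bproj {α : Type*} (U : Set α) (t : ℕ) : (↥U ⊕ ↥(Uᶜ) × Fin t) → α
  | Sum.inl u => u.1
  | Sum.inr p => p.1.1

def sameCopy {α : Type*} (U : Set α) (t : ℕ) :
    (↥U ⊕ ↥(Uᶜ) × Fin t) → (↥U ⊕ ↥(Uᶜ) × Fin t) → Prop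
  | Sum.inr p, Sum.inr q => p.2 = q.2
  | _, _ => True

/-- The `(U, t)`-blow-up of `H`: `t` copies of `H` with the vertices of `U` identified. -/
def blowup {α : Type*} (H : SimpleGraph α) (U : Set α) (t : ℕ) :
    SimpleGraph (↥U ⊕ ↥(Uᶜ) × Fin t) where
  Adj x y := H.Adj (bproj U t x) (bproj U t y) ∧ sameCopy U t x y
  symm := by
    constructor
    rintro x y ⟨h1, h2⟩
    refine ⟨h1.symm, ?_⟩
    cases x <;> cases y <;> simp_all [sameCopy, eq_comm]
  loopless := by
    constructor
    rintro x ⟨h1, _⟩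
    exact H.irrefl h1

lemma compress {α γ : Type*} [Fintype γ] [Nonempty γ] {H : SimpleGraph α} (T : SimpleGraph γ)
    {U : Set α} {k : ℕ} (h : HasCopy T (blowup H U k)) :
    HasCopy T (blowup H U (Fintype.card γ)) := by
  classical
  obtain ⟨f, hf⟩ := h
  set t := Fintype.card γ with ht
  have ht1 : 1 ≤ t := Fintype.card_pos
  -- the set of used indices
  let g : γ → Option (Fin k) := fun v => match f v with
    | Sum.inl _ => none
    | Sum.inr p => some p.2
  let S : Finset (Option (Fin k)) := Finset.univ.image g
  have hS : Fintype.card ↥S ≤ t := by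
    rw [Fintype.card_coe]
    exact (Finset.card_image_le).trans (by simp [ht])
  obtain ⟨e⟩ := Function.Embedding.nonempty_of_card_le (hS.trans_eq (Fintype.card_fin t).symm)
  have : Nonempty (Fin t) := ⟨⟨0, ht1⟩⟩
  let j : Fin k → Fin t := fun i =>
    if h : some i ∈ S then e ⟨some i, h⟩ else Classical.arbitrary _
  let ψ : (↥U ⊕ ↥(Uᶜ) × Fin k) → (↥U ⊕ ↥(Uᶜ) × Fin t) :=
    Sum.map id (Prod.map id j)
  have hmem : ∀ v : γ, ∀ p, f v = Sum.inr p → some p.2 ∈ S := by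
    intro v p hp
    refine Finset.mem_image.2 ⟨v, Finset.mem_univ _, ?_⟩
    simp [g, hp]
  have hjinj : ∀ v w : γ, ∀ p q, f v = Sum.inr p → f w = Sum.inr q →
      j p.2 = j q.2 → p.2 = q.2 := by
    intro v w p q hp hq hj
    have h1 := hmem v p hp
    have h2 := hmem w q hq
    simp only [j, dif_pos h1, dif_pos h2] at hj
    have := e.injective hj
    simpa using this
  have hinj : Function.Injective (ψ ∘ f) := by
    intro v w hvw
    apply f.injective
    rcases hp : f v with u | p <;> rcases hq : f w with u' | q <;>
      simp only [Function.comp, hp, hq, ψ, Sum.map, Prod.map] at hvw ⊢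
    · simpa using hvw
    · exact absurd hvw (by simp)
    · exact absurd hvw (by simp)
    · obtain ⟨h1, h2⟩ := by simpa [Prod.ext_iff] using hvw
      exact congrArg Sum.inr (Prod.ext h1 (hjinj v w p q hp hq h2))
  refine ⟨⟨ψ ∘ f, hinj⟩, ?_⟩
  intro a b hab
  obtain ⟨h1, h2⟩ := hf a b hab
  constructor
  · have e1 : bproj U t (ψ (f a)) = bproj U k (f a) := by
      rcases f a with u | p <;> rfl
    have e2 : bproj U t (ψ (f b)) = bproj U k (f b) := by
      rcases f b with u | p <;> rfl
    simpa [Function.Embedding.coeFn_mk, e1, e2] using h1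
  · rcases hp : f a with u | p <;> rcases hq : f b with u' | q <;>
      simp only [Function.Embedding.coeFn_mk, Function.comp, hp, hq, ψ, Sum.map, Prod.map,
        sameCopy] <;> try trivial
    rw [hp, hq] at h2
    exact congrArg j h2

/-- If `H \ U` has `r` components and the `(U,|T|)`-blow-up of `H` is `T`-free, then for every
positive `n` divisible by `|H|` there is a `T`-free graph on `n` vertices with at least
`(n/|H|)^r` copies of `H`; consequently `ex(n,H,T) ≥ (n/|H|)^r`. -/
theorem stmt_2 {α γ : Type*} [Fintype α] [Fintype γ] (H : SimpleGraph α) (T : SimpleGraph γ)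
    (hTree : T.IsTree) (U : Set α) (r : ℕ)
    (hr : Nat.card ((H.induce Uᶜ).ConnectedComponent) = r)
    (hfree : TFree (blowup H U (Fintype.card γ)) T) :
    ∀ n : ℕ, 0 < n → Fintype.card α ∣ n →
      (∃ G : SimpleGraph (Fin n), TFree G T ∧ (n / Fintype.card α) ^ r ≤ copyCount H G) ∧
      (n / Fintype.card α) ^ r ≤ exNum n H T := by
  classical
  intro n hn hdvd
  obtain ⟨k, hk⟩ := hdvd
  have hαpos : 0 < Fintype.card α := by
    rcases Nat.eq_zero_or_pos (Fintype.card α) with h | h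
    · rw [h, zero_mul] at hk; omega
    · exact h
  have hkpos : 0 < k := by
    rcases Nat.eq_zero_or_pos k with h | h
    · rw [h, mul_zero] at hk; omega
    · exact h
  have hquot : n / Fintype.card α = k := by rw [hk, Nat.mul_div_cancel_left _ hαpos]
  haveI : Nonempty γ := hTree.isConnected.nonempty
  haveI : Nonempty α := Fintype.card_pos_iff.mp hαpos
  set t := Fintype.card γ with htdef
  -- rule out t = 1
  have ht2 : 2 ≤ t := by
    by_contra h
    have ht1 : t = 1 := by have := @Fintype.card_pos γ _ _; omega
    haveI : Subsingleton γ := Fintype.card_le_one_iff_subsingleton.mp (by omega)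
    apply hfree
    have hne : Nonempty (↥U ⊕ ↥(Uᶜ) × Fin t) := by
      obtain ⟨a⟩ := ‹Nonempty α›
      by_cases ha : a ∈ U
      · exact ⟨Sum.inl ⟨a, ha⟩⟩
      · exact ⟨Sum.inr (⟨a, ha⟩, ⟨0, by omega⟩)⟩
    obtain ⟨x0⟩ := hne
    refine ⟨⟨fun _ => x0, fun a b _ => Subsingleton.elim a b⟩, ?_⟩
    intro a b hab
    exact absurd (Subsingleton.elim a b) (T.ne_of_adj hab)
  -- the big blow-up
  set B := blowup H U k with hB
  -- embed its vertex set into Fin n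
  have hcard : Fintype.card (↥U ⊕ ↥(Uᶜ) × Fin k) ≤ Fintype.card (Fin n) := by
    have hsum : Fintype.card ↥U + Fintype.card ↥(Uᶜ) = Fintype.card α := by
      rw [← Fintype.card_sum]
      exact Fintype.card_congr (Equiv.Set.sumCompl U)
    rw [Fintype.card_sum, Fintype.card_prod, Fintype.card_fin, Fintype.card_fin]
    calc Fintype.card ↥U + Fintype.card ↥(Uᶜ) * k
        ≤ Fintype.card ↥U * k + Fintype.card ↥(Uᶜ) * k :=
          Nat.add_le_add_right (Nat.le_mul_of_pos_right _ hkpos) _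
      _ = Fintype.card α * k := by rw [← Nat.add_mul, hsum]
      _ = n := hk.symm
  obtain ⟨emb⟩ := Function.Embedding.nonempty_of_card_le hcard
  set G := SimpleGraph.map emb B with hG
  -- T-freeness of G
  have hGfree : TFree G T := by
    rintro ⟨g, hg⟩
    apply hfree
    apply compress (k := k)
    -- every vertex of T has a neighbour
    have hnbr : ∀ v : γ, ∃ w, T.Adj v w := by
      intro v
      obtain ⟨w, hw⟩ := Fintype.exists_ne_of_one_lt_card (by omega) v
      obtain ⟨p⟩ := hTree.isConnected.preconnected v w
      cases p with
      | nil => exact absurd rfl hw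
      | cons h _ => exact ⟨_, h⟩
    have hrange : ∀ v : γ, ∃ x, emb x = g v := by
      intro v
      obtain ⟨w, hw⟩ := hnbr v
      obtain ⟨x, y, _, hx, _⟩ := (SimpleGraph.map_adj emb B _ _).mp (hg v w hw)
      exact ⟨x, hx⟩
    choose g' hg' using hrange
    have hg'inj : Function.Injective g' := by
      intro a b hab
      exact g.injective (by rw [← hg' a, ← hg' b, hab])
    refine ⟨⟨g', hg'inj⟩, ?_⟩
    intro a b hab
    obtain ⟨x, y, hxy, hx, hy⟩ := (SimpleGraph.map_adj emb B _ _).mp (hg a b hab)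
    have hxa : x = g' a := emb.injective (by rw [hx, hg'])
    have hyb : y = g' b := emb.injective (by rw [hy, hg'])
    rwa [hxa, hyb] at hxy
  -- counting copies
  have hcount : (n / Fintype.card α) ^ r ≤ copyCount H G := by
    rw [hquot]
    set C := (H.induce Uᶜ).ConnectedComponent with hC
    let φ : (C → Fin k) → α → (↥U ⊕ ↥(Uᶜ) × Fin k) := fun c x =>
      if hx : x ∈ U then Sum.inl ⟨x, hx⟩
      else Sum.inr (⟨x, hx⟩, c ((H.induce Uᶜ).connectedComponentMk ⟨x, hx⟩))
    have hφinj : ∀ c, Function.Injective (φ c) := by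
      intro c x y hxy
      by_cases hx : x ∈ U <;> by_cases hy : y ∈ U <;>
        simp only [φ, dif_pos, dif_neg, hx, hy] at hxy <;> simp_all
    have hφcopy : ∀ c, ∀ a b, H.Adj a b → B.Adj (φ c a) (φ c b) := by
      intro c a b hab
      constructor
      · have e1 : bproj U k (φ c a) = a := by by_cases h : a ∈ U <;> simp [φ, h, bproj]
        have e2 : bproj U k (φ c b) = b := by by_cases h : b ∈ U <;> simp [φ, h, bproj]
        rw [e1, e2]; exact hab
      · by_cases ha : a ∈ U <;> by_cases hb : b ∈ U <;>
          simp only [φ, dif_pos, dif_neg, ha, hb, sameCopy] <;> try trivial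
        have hadj : (H.induce Uᶜ).Adj ⟨a, ha⟩ ⟨b, hb⟩ := by
          simp [SimpleGraph.comap, hab]
        exact congrArg c (SimpleGraph.ConnectedComponent.connectedComponentMk_eq_of_adj hadj)
    let Φ : (C → Fin k) → {f : α ↪ Fin n // IsCopy H G f} := fun c =>
      ⟨(⟨φ c, hφinj c⟩ : α ↪ _).trans emb, by
        intro a b hab
        exact (SimpleGraph.map_adj emb B _ _).mpr ⟨φ c a, φ c b, hφcopy c a b hab, rfl, rfl⟩⟩
    have hΦinj : Function.Injective Φ := by
      intro c c' hcc
      funext q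
      obtain ⟨v, rfl⟩ := q.exists_rep
      have hv : (v : α) ∉ U := v.2
      have := congrFun (congrArg (fun f => (f : α ↪ Fin n) ∘ Subtype.val) (congrArg Subtype.val hcc)) v
      simp only [Function.Embedding.trans_apply, Function.comp] at this
      have heq : φ c v = φ c' v := emb.injective this
      simp only [φ, dif_neg hv] at heq
      have := (Sum.inr.injEq _ _).mp heq
      have h2 := (Prod.ext_iff.mp (by exact_mod_cast this)).2
      simp at h2; exact h2
    calc k ^ r = Nat.card (C → Fin k) := by
          rw [Nat.card_fun, Nat.card_eq_fintype_card (α := Fin k), Fintype.card_fin, hr]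
      _ ≤ copyCount H G := Nat.card_le_card_of_injective Φ hΦinj
  refine ⟨⟨G, hGfree, hcount⟩, ?_⟩
  have hbdd : BddAbove {m | ∃ G' : SimpleGraph (Fin n), TFree G' T ∧ copyCount H G' = m} := by
    refine ⟨Nat.card (α ↪ Fin n), ?_⟩
    rintro m ⟨G', -, rfl⟩
    exact Nat.card_le_card_of_injective Subtype.val Subtype.val_injective
  exact hcount.trans (le_csSup hbdd ⟨G, hGfree, rfl⟩)
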